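/- Let $d \geq 3$, $k \geq 2$ be integers and let $E_k^d = [\frac{-d^{k-2}(d-1)2\pi}{d^k-1}, \frac{d^{k-2}2\pi}{d^k-1}) \cup [\frac{2\pi}{d} - \frac{(d-1)2\pi}{d(d^k-1)}, \frac{2\pi}{d} + \frac{2\pi}{d(d^k-1)}) \cup \bigcup_{j=1}^{k-2}[2\pi d^{j-1} - \frac{d^{j-1}(d-1)2\pi}{d^k-1}, 2\pi d^{j-1} + \frac{d^{j-1}2\pi}{d^k-1})$. Then $E_k^d \subseteq d \cdot E_k^d$ and $d\cdot E_k^d \setminus E_k^d = [\frac{-d^{k-1}(d-1)2\pi}{d^k-1}, \frac{-d^{k-2}(d-1)2\pi}{d^k-1}) \cup [\frac{d^{k-2}2\pi}{d^k-1}, \frac{2\pi}{d} - \frac{(d-1)2\pi}{d(d^k-1)}) \cup [2\pi d^{k-2} - \frac{d^{k-2}(d-1)2\pi}{d^k-1}, 2\pi d^{k-2} + \frac{d^{k-2}2\pi}{d^k-1})$. -/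
import Mathlib

open Real Set

/-- The generalized scaling set `E_k^d` for dilation `d ≥ 3`. -/
noncomputable def genScalingSetD (d k : ℕ) : Set ℝ :=
  Ico (-((d:ℝ)^(k-2) * ((d:ℝ) - 1) * (2*π)) / ((d:ℝ)^k - 1))
      (((d:ℝ)^(k-2) * (2*π)) / ((d:ℝ)^k - 1)) ∪
  Ico (2*π/(d:ℝ) - ((d:ℝ) - 1) * (2*π) / ((d:ℝ) * ((d:ℝ)^k - 1)))
      (2*π/(d:ℝ) + 2*π / ((d:ℝ) * ((d:ℝ)^k - 1))) ∪
  ⋃ j ∈ Finset.Icc 1 (k - 2),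
    Ico (2*π*(d:ℝ)^(j-1) - ((d:ℝ)^(j-1) * ((d:ℝ) - 1) * (2*π)) / ((d:ℝ)^k - 1))
        (2*π*(d:ℝ)^(j-1) + ((d:ℝ)^(j-1) * (2*π)) / ((d:ℝ)^k - 1))

private lemma img_Ico {c : ℝ} (hc : 0 < c) (a b : ℝ) :
    (fun x : ℝ => c * x) '' Ico a b = Ico (c * a) (c * b) := by
  ext x
  constructor
  · rintro ⟨y, ⟨h1, h2⟩, rfl⟩
    exact ⟨mul_le_mul_of_nonneg_left h1 hc.le, mul_lt_mul_of_pos_left h2 hc⟩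
  · rintro ⟨h1, h2⟩
    refine ⟨x / c, ⟨?_, ?_⟩, mul_div_cancel₀ x hc.ne'⟩
    · rw [le_div_iff₀ hc]; linarith [mul_comm a c]
    · rw [div_lt_iff₀ hc]; linarith [mul_comm b c]

private lemma nmem_Ico_l {a b x : ℝ} (h : x < a) : x ∉ Ico a b :=
  fun hm => absurd hm.1 (not_le.2 h)

private lemma nmem_Ico_r {a b x : ℝ} (h : b ≤ x) : x ∉ Ico a b :=
  fun hm => absurd hm.2 (not_lt.2 h)

set_option maxHeartbeats 1000000 in
/-- `E_k^d ⊆ d·E_k^d`, and the wavelet set `W_k^d = d·E_k^d \ E_k^d` is the indicated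
union of three intervals. -/
theorem genScalingSetD_subset_and_waveletSet (d k : ℕ) (hd : 3 ≤ d) (hk : 2 ≤ k) :
    genScalingSetD d k ⊆ (fun x : ℝ => (d:ℝ) * x) '' genScalingSetD d k ∧
    ((fun x : ℝ => (d:ℝ) * x) '' genScalingSetD d k) \ genScalingSetD d k =
      Ico (-((d:ℝ)^(k-1) * ((d:ℝ) - 1) * (2*π)) / ((d:ℝ)^k - 1))
          (-((d:ℝ)^(k-2) * ((d:ℝ) - 1) * (2*π)) / ((d:ℝ)^k - 1)) ∪
      Ico (((d:ℝ)^(k-2) * (2*π)) / ((d:ℝ)^k - 1))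
          (2*π/(d:ℝ) - ((d:ℝ) - 1) * (2*π) / ((d:ℝ) * ((d:ℝ)^k - 1))) ∪
      Ico (2*π*(d:ℝ)^(k-2) - ((d:ℝ)^(k-2) * ((d:ℝ) - 1) * (2*π)) / ((d:ℝ)^k - 1))
          (2*π*(d:ℝ)^(k-2) + ((d:ℝ)^(k-2) * (2*π)) / ((d:ℝ)^k - 1)) := by
  obtain ⟨m, rfl⟩ : ∃ m, k = m + 2 := ⟨k - 2, by omega⟩
  have hD3 : (3:ℝ) ≤ (d:ℝ) := by exact_mod_cast hd
  set D : ℝ := (d:ℝ) with hDdef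
  have hD1 : (1:ℝ) < D := by linarith
  have hD0 : (0:ℝ) < D := by linarith
  have hp : ∀ n : ℕ, (1:ℝ) ≤ D ^ n := fun n => one_le_pow₀ (by linarith)
  have hmono : ∀ a b : ℕ, a ≤ b → D ^ a ≤ D ^ b :=
    fun a b h => pow_le_pow_right₀ (by linarith) h
  have hN : (0:ℝ) < D ^ (m+2) - 1 := by
    have := one_lt_pow₀ hD1 (n := m+2) (by omega)
    linarith
  set c : ℝ := 2 * π / (D ^ (m+2) - 1) with hcdef
  have hc : 0 < c := div_pos (by positivity) hN
  -- normalized pieces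
  set A : Set ℝ := Ico (-(D^m*(D-1)) * c) (D^m * c) with hA
  set B : Set ℝ := Ico ((D^(m+1)-1) * c) (D^(m+1) * c) with hB
  set J : ℕ → Set ℝ :=
    fun i => Ico ((D^i * (D^(m+2) - D)) * c) (D^(m+2+i) * c) with hJ
  have hNe : D^(m+2) - 1 ≠ 0 := ne_of_gt hN
  have hDne : D ≠ 0 := ne_of_gt hD0
  have e1 : ∀ n : ℕ, -(D^n*(D-1)*(2*π))/(D^(m+2)-1) = -(D^n*(D-1)) * c := by
    intro n; rw [hcdef]; field_simp
  have e2 : ∀ n : ℕ, (D^n*(2*π))/(D^(m+2)-1) = D^n * c := by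
    intro n; rw [hcdef]; field_simp
  have e3 : 2*π/D - (D-1)*(2*π)/(D*(D^(m+2)-1)) = (D^(m+1)-1) * c := by
    rw [hcdef]; field_simp; ring
  have e4 : 2*π/D + 2*π/(D*(D^(m+2)-1)) = D^(m+1) * c := by
    rw [hcdef]; field_simp; ring
  have e5 : ∀ n : ℕ, 2*π*D^n - (D^n*(D-1)*(2*π))/(D^(m+2)-1) = (D^n * (D^(m+2)-D)) * c := by
    intro n; rw [hcdef]; field_simp; ring
  have e6 : ∀ n : ℕ, 2*π*D^n + (D^n*(2*π))/(D^(m+2)-1) = D^(m+2+n) * c := by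
    intro n; rw [hcdef]; field_simp; ring
  have hE : genScalingSetD d (m+2) = A ∪ B ∪ ⋃ i ∈ Finset.range m, J i := by
    unfold genScalingSetD
    rw [← hDdef]
    simp only [show m + 2 - 2 = m from rfl]
    rw [e1 m, e2 m, e3, e4, hA, hB]
    congr 1
    simp only [e5, e6]
    ext x
    simp only [hJ, mem_iUnion, Finset.mem_Icc, Finset.mem_range, exists_prop]
    constructor
    · rintro ⟨j, ⟨hj1, hj2⟩, hx⟩
      exact ⟨j-1, by omega, hx⟩
    · rintro ⟨i, hi, hx⟩
      refine ⟨i+1, ⟨by omega, by omega⟩, ?_⟩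
      simpa using hx
  have himg : (fun x : ℝ => D * x) '' genScalingSetD d (m+2) =
      Ico (-(D^(m+1)*(D-1)) * c) (D^(m+1) * c) ∪ ⋃ i ∈ Finset.range (m+1), J i := by
    rw [hE, image_union, image_union, image_iUnion₂]
    rw [img_Ico hD0, img_Ico hD0]
    have gJ : ∀ i : ℕ, (fun x : ℝ => D*x) '' J i = J (i+1) := by
      intro i
      simp only [hJ]
      rw [img_Ico hD0]
      congr 1 <;> ring
    have gB : Ico (D * ((D^(m+1)-1) * c)) (D * (D^(m+1) * c)) = J 0 := by
      simp only [hJ]; congr 1 <;> ring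
    have gA : Ico (D * (-(D^m*(D-1)) * c)) (D * (D^m * c))
        = Ico (-(D^(m+1)*(D-1)) * c) (D^(m+1) * c) := by
      congr 1 <;> ring
    simp only [gJ]
    rw [gA, gB, union_assoc]
    congr 1
    ext x
    simp only [mem_union, mem_iUnion, Finset.mem_range, exists_prop]
    constructor
    · rintro (hx | ⟨i, hi, hx⟩)
      exacts [⟨0, by omega, hx⟩, ⟨i+1, by omega, hx⟩]
    · rintro ⟨i, hi, hx⟩
      rcases i with _ | i
      exacts [Or.inl hx, Or.inr ⟨i, by omega, hx⟩]
  -- coefficient facts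
  have hX : D^(m+1) ≤ D^(m+2) - D := by
    have h3 : D^(m+2) = D * D^(m+1) := by ring
    have h4 : D ≤ D^(m+1) := by
      have := hmono 1 (m+1) (by omega); simpa using this
    nlinarith [hp (m+1)]
  have f1 : ∀ i : ℕ, D^(m+1) ≤ D^i * (D^(m+2) - D) := by
    intro i
    nlinarith [hp i, hX, hp (m+1)]
  have f2 : ∀ i : ℕ, i < m → D^(m+2+i) ≤ D^m * (D^(m+2) - D) := by
    intro i hi
    have h1 : D^(m+2+i) ≤ D^(2*m+1) := hmono _ _ (by omega)
    have h2 : D^(m+1) ≤ D^(2*m+1) := hmono _ _ (by omega)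
    have h3 : D^m * (D^(m+2) - D) = D * D^(2*m+1) - D^(m+1) := by ring
    nlinarith [hp (2*m+1)]
  have cmul : ∀ p q : ℝ, p ≤ q → p * c ≤ q * c :=
    fun p q h => mul_le_mul_of_nonneg_right h hc.le
  have cmul' : ∀ p q : ℝ, p < q → p * c < q * c :=
    fun p q h => mul_lt_mul_of_pos_right h hc
  constructor
  · -- subset
    rw [himg]
    conv_lhs => rw [hE]
    refine union_subset (union_subset ?_ ?_) ?_
    · refine (Ico_subset_Ico (cmul _ _ ?_) (cmul _ _ ?_)).trans subset_union_left
      · nlinarith [hp m, hmono m (m+1) (by omega)]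
      · exact hmono m (m+1) (by omega)
    · refine (Ico_subset_Ico (cmul _ _ ?_) (cmul _ _ le_rfl)).trans subset_union_left
      nlinarith [hp (m+1)]
    · refine iUnion₂_subset fun i hi => fun x hx => Or.inr ?_
      rw [mem_iUnion₂]
      exact ⟨i, by simp only [Finset.mem_range] at hi ⊢; omega, hx⟩
  · -- wavelet set
    rw [himg, hE]
    simp only [show m+2-1 = m+1 from rfl, show m+2-2 = m from rfl]
    have hW : (Ico (-(D^(m+1) * (D - 1) * (2*π)) / (D^(m+2) - 1))
          (-(D^m * (D - 1) * (2*π)) / (D^(m+2) - 1)) ∪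
        Ico ((D^m * (2*π)) / (D^(m+2) - 1))
          (2*π/D - (D - 1) * (2*π) / (D * (D^(m+2) - 1))) ∪
        Ico (2*π*D^m - (D^m * (D - 1) * (2*π)) / (D^(m+2) - 1))
          (2*π*D^m + (D^m * (2*π)) / (D^(m+2) - 1))) =
        (Ico (-(D^(m+1)*(D-1)) * c) (-(D^m*(D-1)) * c) ∪
         Ico (D^m * c) ((D^(m+1)-1) * c) ∪ J m) := by
      simp only [hJ]
      rw [e1 (m+1), e1 m, e5 m, e6 m, e2 m, e3]
    rw [hW]
    ext x
    simp only [mem_diff, mem_union, mem_iUnion, Finset.mem_range, exists_prop, not_or,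
      not_exists, not_and]
    constructor
    · rintro ⟨hin, ⟨hnA, hnB⟩, hnJ⟩
      rcases hin with ⟨hL, hR⟩ | ⟨i, hi, hx⟩
      · rcases lt_or_ge x (-(D^m*(D-1)) * c) with h1 | h1
        · exact Or.inl (Or.inl ⟨hL, h1⟩)
        · have h2 : D^m * c ≤ x := le_of_not_gt fun h => hnA ⟨h1, h⟩
          have h3 : x < (D^(m+1)-1) * c := lt_of_not_ge fun h => hnB ⟨h, hR⟩
          exact Or.inl (Or.inr ⟨h2, h3⟩)
      · rcases Nat.lt_or_ge i m with him | him
        · exact absurd hx (hnJ i him)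
        · have : i = m := by omega
          subst this
          exact Or.inr hx
    · rintro ((⟨h1, h2⟩ | ⟨h1, h2⟩) | ⟨h1, h2⟩)
      · have hx0 : x < 0 := by
          have h0 : (0:ℝ) ≤ (D^m*(D-1)) * c := mul_nonneg (by nlinarith [hp m]) hc.le
          linarith
        refine ⟨Or.inl ⟨h1, lt_of_lt_of_le hx0 (by positivity)⟩, ⟨nmem_Ico_l h2, ?_⟩, ?_⟩
        · exact nmem_Ico_l (lt_of_lt_of_le hx0 (by nlinarith [hp (m+1)]))
        · intro i _
          exact nmem_Ico_l (lt_of_lt_of_le hx0 (by nlinarith [f1 i, hp (m+1)]))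
      · have hx0 : (0:ℝ) ≤ x := le_trans (by positivity) h1
        refine ⟨Or.inl ⟨le_trans (by nlinarith [hp (m+1)]) hx0,
            lt_of_lt_of_le h2 (cmul _ _ (by nlinarith [hp (m+1)]))⟩,
          ⟨nmem_Ico_r h1, nmem_Ico_l h2⟩, ?_⟩
        intro i _
        refine nmem_Ico_l (lt_of_lt_of_le h2 (cmul _ _ ?_))
        nlinarith [f1 i, hp (m+1)]
      · refine ⟨Or.inr ?_, ⟨?_, ?_⟩, ?_⟩
        · exact ⟨m, by omega, h1, h2⟩
        · refine nmem_Ico_r (le_trans (cmul _ _ ?_) h1)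
          nlinarith [f1 m, hmono m (m+1) (by omega), hp m]
        · exact nmem_Ico_r (le_trans (cmul _ _ (f1 m)) h1)
        · intro i hi
          exact nmem_Ico_r (le_trans (cmul _ _ (f2 i hi)) h1)
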